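/- Let d, m be coprime positive integers, p a prime, and μ a partition of pd such that not every part of μ is divisible by p. Then the rational function f_{p,m,μ}(x) = (∏_{i=1}^{l(μ)} Q_{pm}(x^{μ_i})) / (Q_{pm}(x) Q_p(x)) is a Laurent polynomial in x, and lies in ℚ[(x - x^{-1})^2]. -/

import Mathlib

set_option maxRecDepth 8000

open LaurentPolynomial

/-- The Laurent polynomial `Q_n(x^k) = ∑_{j=0}^{n-1} x^{k(n-1-2j)}`, where
`Q_n(y) = (y^n - y^{-n})/(y - y^{-1})`. -/
noncomputable def QL (n : ℕ) (k : ℤ) : LaurentPolynomial ℚ :=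
  ∑ j ∈ Finset.range n, T (k * ((n : ℤ) - 1 - 2 * (j : ℤ)))

namespace Stmt11Aux

open Polynomial

/-- `(X^{2cn} - 1)/(X^{2c} - 1)` as a polynomial. -/
noncomputable def q (n c : ℕ) : Polynomial ℚ := ∑ j ∈ Finset.range n, X ^ (2 * c * j)

lemma q_mul (n c : ℕ) : q n c * (X ^ (2 * c) - 1) = X ^ (2 * c * n) - 1 := by
  have h := geom_sum_mul (X ^ (2 * c) : Polynomial ℚ) n
  simp only [← pow_mul] at h
  simpa [q] using h

lemma q_ne_zero (n c : ℕ) (hn : 0 < n) (hc : 0 < c) : q n c ≠ 0 := by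
  intro h
  have h2 := q_mul n c
  rw [h, zero_mul] at h2
  have h3 : (X : Polynomial ℚ) ^ (2 * c * n) = 1 := by linear_combination -h2
  have h4 := congrArg natDegree h3
  simp [natDegree_X_pow] at h4
  omega

lemma QL_eq (n c : ℕ) : QL n (c : ℤ) = Polynomial.toLaurent (q n c) * T (-(c * ((n : ℤ) - 1))) := by
  rw [QL, q, map_sum, Finset.sum_mul, ← Finset.sum_range_reflect]
  apply Finset.sum_congr rfl
  intro j hj
  rw [Polynomial.toLaurent_X_pow, ← T_add]
  congr 1
  have hj' : j < n := Finset.mem_range.mp hj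
  have : ((n - 1 - j : ℕ) : ℤ) = (n : ℤ) - 1 - j := by
    push_cast [Nat.cast_sub (by omega : j + 1 ≤ n)]
    omega
  rw [this]
  push_cast
  ring

lemma prod_map_finset_prod {α β M : Type*} [CommMonoid M] (s : Multiset α) (S : Finset β)
    (g : β → α → M) :
    (s.map fun c => ∏ e ∈ S, g e c).prod = ∏ e ∈ S, (s.map (g e)).prod := by
  induction s using Multiset.induction_on with
  | empty => simp
  | cons a s ih => simp [ih, Finset.prod_mul_distrib]

lemma prod_map_pow_sum {α M : Type*} [CommMonoid M] (s : Multiset α) (h : M) (f : α → ℕ) :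
    (s.map fun c => h ^ f c).prod = h ^ (s.map f).sum := by
  induction s using Multiset.induction_on with
  | empty => simp
  | cons a s ih => simp [ih, pow_add]

lemma Xpow_sub_one_eq {N K : ℕ} (hN : N ≠ 0) (hK : K ≠ 0) (hKN : K ∣ N) :
    (X ^ K - 1 : Polynomial ℚ) =
      ∏ e ∈ N.divisors, Polynomial.cyclotomic e ℚ ^ (if e ∣ K then 1 else 0) := by
  simp only [pow_ite, pow_one, pow_zero]
  rw [Finset.prod_ite, Finset.prod_const_one, mul_one]
  rw [← Polynomial.prod_cyclotomic_eq_X_pow_sub_one (Nat.pos_of_ne_zero hK)]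
  congr 1
  ext e
  simp only [Finset.mem_filter, Nat.mem_divisors]
  constructor
  · rintro ⟨heK, -⟩; exact ⟨⟨heK.trans hKN, hN⟩, heK⟩
  · rintro ⟨-, heK⟩; exact ⟨heK, hK⟩

lemma two_parts (p : ℕ) (hp : p.Prime) (l : Multiset ℕ) (hsum : p ∣ l.sum)
    (hex : ∃ c ∈ l, ¬ p ∣ c) :
    ∃ a b t, l = a ::ₘ b ::ₘ t ∧ ¬ p ∣ a ∧ ¬ p ∣ b := by
  classical
  set t₁ := l.filter (fun c => ¬ p ∣ c) with ht₁
  have hsub : t₁ ≤ l := Multiset.filter_le _ _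
  have hmem : ∀ c ∈ t₁, ¬ p ∣ c := fun c hc => (Multiset.mem_filter.mp hc).2
  have hne : t₁ ≠ 0 := by
    obtain ⟨c, hcl, hcd⟩ := hex
    intro h
    exact (Multiset.eq_zero_iff_forall_notMem.mp h c) (Multiset.mem_filter.mpr ⟨hcl, hcd⟩)
  have hc2 : 2 ≤ Multiset.card t₁ := by
    by_contra hlt
    push_neg at hlt
    have hcard1 : Multiset.card t₁ = 1 := by
      have := Multiset.card_pos.mpr hne
      omega
    obtain ⟨x, hx⟩ := Multiset.card_eq_one.mp hcard1
    have hsplit : l.filter (fun c => p ∣ c) + t₁ = l := by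
      rw [ht₁]; exact Multiset.filter_add_not _ _
    have h1 : p ∣ (l.filter (fun c => p ∣ c)).sum :=
      Multiset.dvd_sum (fun x hx => (Multiset.mem_filter.mp hx).2)
    have h2 : p ∣ t₁.sum := by
      have hs : (l.filter (fun c => p ∣ c)).sum + t₁.sum = l.sum := by
        rw [← Multiset.sum_add, hsplit]
      exact (Nat.dvd_add_right h1).mp (hs ▸ hsum)
    rw [hx, Multiset.sum_singleton] at h2
    exact hmem x (hx ▸ Multiset.mem_singleton_self x) h2
  obtain ⟨a, ha⟩ := Multiset.exists_mem_of_ne_zero hne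
  obtain ⟨t', ht'⟩ := Multiset.exists_cons_of_mem ha
  have ht'ne : t' ≠ 0 := by
    intro h; rw [ht', h] at hc2; simp at hc2
  obtain ⟨b, hb⟩ := Multiset.exists_mem_of_ne_zero ht'ne
  obtain ⟨t'', ht''⟩ := Multiset.exists_cons_of_mem hb
  have hle : a ::ₘ b ::ₘ t'' ≤ l := by rw [← ht'', ← ht']; exact hsub
  obtain ⟨u, hu⟩ := Multiset.le_iff_exists_add.mp hle
  refine ⟨a, b, t'' + u, ?_, ?_, ?_⟩
  · rw [hu]; simp [Multiset.cons_add]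
  · exact hmem a (by rw [ht']; exact Multiset.mem_cons_self _ _)
  · exact hmem b (by rw [ht', ht'']; exact Multiset.mem_cons_of_mem (Multiset.mem_cons_self _ _))

lemma key_dvd (p m d : ℕ) (hp : p.Prime) (hm : 0 < m) (hd : 0 < d) (hcop : Nat.Coprime d m)
    (l : Multiset ℕ) (hl : ∀ c ∈ l, 0 < c) (hsum : l.sum = p * d)
    (hex : ∃ c ∈ l, ¬ p ∣ c) :
    ∃ G : Polynomial ℚ,
      (l.map (fun c => q (p * m) c)).prod = q (p * m) 1 * q p 1 * G := by
  classical
  have hp0 : 0 < p := hp.pos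
  set N : ℕ := 2 * (p * m) * l.prod with hN_def
  have hlprod : 0 < l.prod := Multiset.prod_pos hl
  have hN : N ≠ 0 := by positivity
  -- the exponent functions
  set aE : ℕ → ℕ := fun e =>
    (if e ∣ 2 * (p * m) then 1 else 0) + (if e ∣ 2 * p then 1 else 0) +
      (l.map fun c => if e ∣ 2 * c then 1 else 0).sum with haE
  set bE : ℕ → ℕ := fun e =>
    2 * (if e ∣ 2 then 1 else 0) + (l.map fun c => if e ∣ 2 * c * (p * m) then 1 else 0).sum
    with hbE
  obtain ⟨a, b, t, hlab, hpa, hpb⟩ := two_parts p hp l (hsum ▸ Dvd.intro d rfl) hex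
  have hpw : ∀ e c : ℕ, (if e ∣ 2 * c then (1:ℕ) else 0) ≤ (if e ∣ 2 * c * (p * m) then 1 else 0) := by
    intro e c
    by_cases h1 : e ∣ 2 * c
    · rw [if_pos h1, if_pos (h1.mul_right _)]
    · simp [h1]
  have hsum_le : ∀ (e : ℕ) (s : Multiset ℕ),
      (s.map fun c => if e ∣ 2 * c then (1:ℕ) else 0).sum ≤
      (s.map fun c => if e ∣ 2 * c * (p * m) then 1 else 0).sum :=
    fun e s => Multiset.sum_map_le_sum_map _ _ (fun c _ => hpw e c)
  have hab : ∀ e : ℕ, aE e ≤ bE e := by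
    intro e
    simp only [haE, hbE]
    by_cases h2 : e ∣ 2
    · have h2pm : e ∣ 2 * (p * m) := h2.mul_right _
      have h2p : e ∣ 2 * p := h2.mul_right _
      rw [if_pos h2pm, if_pos h2p, if_pos h2]
      have := hsum_le e l
      omega
    by_cases h2p : e ∣ 2 * p
    · have h2pm : e ∣ 2 * (p * m) := h2p.trans ⟨m, by ring⟩
      rw [if_pos h2pm, if_pos h2p, if_neg h2, hlab]
      simp only [Multiset.map_cons, Multiset.sum_cons]
      have hfa : ¬ e ∣ 2 * a := by
        intro h
        have hg := Nat.dvd_gcd h2p h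
        rw [Nat.gcd_mul_left] at hg
        have hco : Nat.gcd p a = 1 := (Nat.Prime.coprime_iff_not_dvd hp).mpr hpa
        rw [hco, mul_one] at hg
        exact h2 hg
      have hfb : ¬ e ∣ 2 * b := by
        intro h
        have hg := Nat.dvd_gcd h2p h
        rw [Nat.gcd_mul_left] at hg
        have hco : Nat.gcd p b = 1 := (Nat.Prime.coprime_iff_not_dvd hp).mpr hpb
        rw [hco, mul_one] at hg
        exact h2 hg
      rw [if_neg hfa, if_neg hfb,
        if_pos (show e ∣ 2 * a * (p * m) from h2p.trans ⟨a * m, by ring⟩),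
        if_pos (show e ∣ 2 * b * (p * m) from h2p.trans ⟨b * m, by ring⟩)]
      have := hsum_le e t
      omega
    by_cases hpm : e ∣ 2 * (p * m)
    · rw [if_pos hpm, if_neg h2p, if_neg h2]
      have hex2 : ∃ c ∈ l, ¬ e ∣ 2 * c := by
        by_contra hcon
        push_neg at hcon
        have h1 : e ∣ (l.map (fun c => 2 * c)).sum :=
          Multiset.dvd_sum (fun x hx => by
            obtain ⟨c, hc, rfl⟩ := Multiset.mem_map.mp hx
            exact hcon c hc)
        have h2' : (l.map fun c => 2 * c).sum = 2 * (p * d) := by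
          have hh : (l.map fun c => 2 * c).sum = 2 * l.sum := by
            have := Multiset.sum_map_mul_left (s := l) (a := 2) (f := fun i => i)
            simpa using this
          rw [hh, hsum]
        have hge : e ∣ Nat.gcd (2 * (p * d)) (2 * (p * m)) := Nat.dvd_gcd (h2' ▸ h1) hpm
        rw [Nat.gcd_mul_left, Nat.gcd_mul_left] at hge
        have hg1 : Nat.gcd d m = 1 := hcop
        rw [hg1, mul_one] at hge
        exact h2p hge
      obtain ⟨c₀, hc₀l, hc₀⟩ := hex2
      obtain ⟨t0, ht0⟩ := Multiset.exists_cons_of_mem hc₀l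
      rw [ht0]
      simp only [Multiset.map_cons, Multiset.sum_cons]
      rw [if_neg hc₀, if_pos (show e ∣ 2 * c₀ * (p * m) from hpm.trans ⟨c₀, by ring⟩)]
      have := hsum_le e t0
      omega
    · rw [if_neg hpm, if_neg h2p, if_neg h2]
      have := hsum_le e l
      omega
  have hE1 : (X ^ (2 * (p * m)) - 1) * (X ^ (2 * p) - 1) *
      (l.map fun c => (X : Polynomial ℚ) ^ (2 * c) - 1).prod =
      ∏ e ∈ N.divisors, Polynomial.cyclotomic e ℚ ^ aE e := by
    have hdvd1 : 2 * (p * m) ∣ N := dvd_mul_right _ _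
    have hdvd2 : 2 * p ∣ N := ⟨m * l.prod, by rw [hN_def]; ring⟩
    have e1 : (l.map fun c => (X : Polynomial ℚ) ^ (2 * c) - 1) =
        l.map (fun c => ∏ e ∈ N.divisors,
          Polynomial.cyclotomic e ℚ ^ (if e ∣ 2 * c then 1 else 0)) := by
      apply Multiset.map_congr rfl
      intro c hc
      obtain ⟨k, hk⟩ := Multiset.dvd_prod hc
      exact Xpow_sub_one_eq hN (by have := hl c hc; positivity)
        ⟨p * m * k, by rw [hN_def, hk]; ring⟩
    rw [Xpow_sub_one_eq hN (by positivity) hdvd1, Xpow_sub_one_eq hN (by positivity) hdvd2,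
      e1, prod_map_finset_prod, ← Finset.prod_mul_distrib, ← Finset.prod_mul_distrib]
    apply Finset.prod_congr rfl
    intro e he
    rw [prod_map_pow_sum, ← pow_add, ← pow_add]
  have hE2 : ((X : Polynomial ℚ) ^ 2 - 1) ^ 2 *
      (l.map fun c => (X : Polynomial ℚ) ^ (2 * c * (p * m)) - 1).prod =
      ∏ e ∈ N.divisors, Polynomial.cyclotomic e ℚ ^ bE e := by
    have hdvd3 : (2 : ℕ) ∣ N := ⟨p * m * l.prod, by rw [hN_def]; ring⟩
    have e1 : (l.map fun c => (X : Polynomial ℚ) ^ (2 * c * (p * m)) - 1) =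
        l.map (fun c => ∏ e ∈ N.divisors,
          Polynomial.cyclotomic e ℚ ^ (if e ∣ 2 * c * (p * m) then 1 else 0)) := by
      apply Multiset.map_congr rfl
      intro c hc
      obtain ⟨k, hk⟩ := Multiset.dvd_prod hc
      exact Xpow_sub_one_eq hN (by have := hl c hc; positivity)
        ⟨k, by rw [hN_def, hk]; ring⟩
    have e2 : ((X : Polynomial ℚ) ^ 2 - 1) =
        ∏ e ∈ N.divisors, Polynomial.cyclotomic e ℚ ^ (if e ∣ 2 then 1 else 0) :=
      Xpow_sub_one_eq hN (by norm_num) hdvd3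
    rw [e2, e1, prod_map_finset_prod, ← Finset.prod_pow, ← Finset.prod_mul_distrib]
    apply Finset.prod_congr rfl
    intro e he
    rw [prod_map_pow_sum, ← pow_mul, ← pow_add]
    simp only [hbE]
    congr 1
    ring
  obtain ⟨G, hG⟩ : (∏ e ∈ N.divisors, Polynomial.cyclotomic e ℚ ^ aE e) ∣
      ∏ e ∈ N.divisors, Polynomial.cyclotomic e ℚ ^ bE e :=
    Finset.prod_dvd_prod_of_dvd _ _ (fun e _ => pow_dvd_pow _ (hab e))
  refine ⟨G, ?_⟩
  have hq1 : q (p * m) 1 * ((X : Polynomial ℚ) ^ 2 - 1) = X ^ (2 * (p * m)) - 1 := by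
    have := q_mul (p * m) 1; simpa using this
  have hq2 : q p 1 * ((X : Polynomial ℚ) ^ 2 - 1) = X ^ (2 * p) - 1 := by
    have := q_mul p 1; simpa using this
  have e3 : (l.map fun c => (X : Polynomial ℚ) ^ (2 * c * (p * m)) - 1).prod =
      (l.map fun c => q (p * m) c).prod *
        (l.map fun c => (X : Polynomial ℚ) ^ (2 * c) - 1).prod := by
    rw [← Multiset.prod_map_mul]
    congr 1
    exact Multiset.map_congr rfl (fun c _ => (q_mul (p * m) c).symm)
  rw [e3] at hE2
  rw [← hq1, ← hq2] at hE1
  have hW : ((X : Polynomial ℚ) ^ 2 - 1) ^ 2 *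
      (l.map fun c => (X : Polynomial ℚ) ^ (2 * c) - 1).prod ≠ 0 := by
    apply mul_ne_zero
    · apply pow_ne_zero
      intro h
      have := congrArg (fun r => Polynomial.coeff r 0) h
      simp at this
    · apply Multiset.prod_ne_zero
      intro hx
      obtain ⟨c, hcl, h⟩ := Multiset.mem_map.mp hx
      replace h : (X : Polynomial ℚ) ^ (2 * c) - 1 = 0 := h
      have := congrArg (fun r => Polynomial.coeff r 0) h
      have hc := hl c hcl
      simp [Polynomial.coeff_X_pow, hc.ne'] at this
  apply mul_left_cancel₀ hW
  linear_combination hE2 + hG - G * hE1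

lemma prod_map_T (s : Multiset ℕ) (g : ℕ → ℤ) :
    (s.map fun c => (T (g c) : LaurentPolynomial ℚ)).prod = T ((s.map g).sum) := by
  induction s using Multiset.induction_on with
  | empty => simp [T_zero]
  | cons a s ih =>
    rw [Multiset.map_cons, Multiset.prod_cons, ih, Multiset.map_cons, Multiset.sum_cons, T_add]

lemma toLaurent_apply_coe (g : Polynomial ℚ) (n : ℕ) :
    (Polynomial.toLaurent g).coeff (n : ℤ) = g.coeff n := by
  rw [LaurentPolynomial.coeff_toLaurent]
  exact (Finsupp.mapDomain_apply Nat.castEmbedding.injective g.toFinsupp.coeff n).trans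
    (g.toFinsupp_apply n)

lemma toLaurent_apply_neg (g : Polynomial ℚ) (n : ℤ) (hn : n < 0) :
    (Polynomial.toLaurent g).coeff n = 0 := by
  rw [LaurentPolynomial.coeff_toLaurent]
  apply Finsupp.mapDomain_notin_range
  rintro ⟨k, rfl⟩
  exact absurd hn (not_lt.mpr (Int.natCast_nonneg k))

lemma mul_T_apply (f : LaurentPolynomial ℚ) (a k : ℤ) :
    (f * T a : LaurentPolynomial ℚ).coeff k = f.coeff (k - a) := by
  have h : (T a : LaurentPolynomial ℚ) = AddMonoidAlgebra.single a 1 := rfl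
  simp only [h, AddMonoidAlgebra.coeff_mul_single_apply, mul_one, sub_eq_add_neg]

lemma aeval_negX_coeff (g : Polynomial ℚ) (k : ℕ) :
    (Polynomial.aeval (-X : Polynomial ℚ) g).coeff k = (-1) ^ k * g.coeff k := by
  induction g using Polynomial.induction_on' with
  | add f g hf hg => simp [hf, hg, mul_add]
  | monomial n a =>
    rw [Polynomial.aeval_monomial, neg_pow,
      show ((-1 : Polynomial ℚ)) ^ n = Polynomial.C ((-1 : ℚ) ^ n) by simp,
      Polynomial.algebraMap_eq]
    simp only [Polynomial.coeff_monomial, ← mul_assoc, ← Polynomial.C_mul,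
      Polynomial.coeff_C_mul, Polynomial.coeff_X_pow]
    rcases eq_or_ne n k with h | h
    · subst h
      simp [mul_comm]
    · rw [if_neg h, if_neg (fun hh => h hh.symm)]
      ring

/-- the basic building block `(x - x⁻¹)²` -/
noncomputable def uL : LaurentPolynomial ℚ := (T 1 - T (-1)) ^ 2

lemma u_eq : uL = Polynomial.toLaurent ((X ^ 2 - 1 : Polynomial ℚ) ^ 2) * T (-2) := by
  have h1 : Polynomial.toLaurent ((X ^ 2 - 1 : Polynomial ℚ)) = T 2 - 1 := by
    simp [map_sub, Polynomial.toLaurent_X_pow]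
  rw [uL, map_pow, h1, sub_sq, sub_sq]
  simp only [T_pow, mul_one, one_pow, one_mul, sub_mul, add_mul, mul_assoc, ← T_add]
  norm_num

lemma u_pow (n : ℕ) :
    uL ^ n = Polynomial.toLaurent ((X ^ 2 - 1 : Polynomial ℚ) ^ (2 * n)) * T (-(2 * (n : ℤ))) := by
  rw [u_eq, mul_pow, T_pow, ← map_pow, ← pow_mul]
  congr 2
  ring

lemma Wp_natDegree (n : ℕ) : (((X : Polynomial ℚ) ^ 2 - 1) ^ (2 * n)).natDegree = 4 * n := by
  rw [show ((X : Polynomial ℚ) ^ 2 - 1) = X ^ 2 - Polynomial.C 1 by rw [Polynomial.C_1]]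
  rw [Polynomial.natDegree_pow, Polynomial.natDegree_X_pow_sub_C]
  ring

lemma Wp_monic (n : ℕ) : (((X : Polynomial ℚ) ^ 2 - 1) ^ (2 * n)).Monic := by
  rw [show ((X : Polynomial ℚ) ^ 2 - 1) = X ^ 2 - Polynomial.C 1 by rw [Polynomial.C_1]]
  exact (Polynomial.monic_X_pow_sub_C 1 two_ne_zero).pow _

lemma Wp_coeff_top (n : ℕ) : (((X : Polynomial ℚ) ^ 2 - 1) ^ (2 * n)).coeff (4 * n) = 1 := by
  have h := (Wp_monic n).coeff_natDegree
  rwa [Wp_natDegree] at h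

lemma Wp_coeff_odd (n k : ℕ) (hk : Odd k) :
    (((X : Polynomial ℚ) ^ 2 - 1) ^ (2 * n)).coeff k = 0 := by
  have hinv : Polynomial.aeval (-X : Polynomial ℚ) (((X : Polynomial ℚ) ^ 2 - 1) ^ (2 * n)) =
      ((X : Polynomial ℚ) ^ 2 - 1) ^ (2 * n) := by
    simp [map_pow, map_sub, neg_sq]
  have h := congrArg (fun r => Polynomial.coeff r k) hinv
  rw [aeval_negX_coeff, hk.neg_one_pow] at h
  linarith

lemma uL_pow_top (n : ℕ) : (uL ^ n).coeff (2 * (n : ℤ)) = 1 := by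
  rw [u_pow, mul_T_apply]
  have h1 : (2 * (n : ℤ) - -(2 * (n : ℤ))) = ((4 * n : ℕ) : ℤ) := by push_cast; ring
  rw [h1, toLaurent_apply_coe, Wp_coeff_top]

lemma uL_pow_bd (n : ℕ) (k : ℤ) (hk : 2 * (n : ℤ) < k) : (uL ^ n).coeff k = 0 := by
  rw [u_pow, mul_T_apply]
  have h1 : k - -(2 * (n : ℤ)) = (((k + 2 * n).toNat : ℕ) : ℤ) := by omega
  rw [h1, toLaurent_apply_coe]
  apply Polynomial.coeff_eq_zero_of_natDegree_lt
  rw [Wp_natDegree]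
  omega

lemma uL_pow_odd (n : ℕ) (k : ℤ) (hk : Odd k) : (uL ^ n).coeff k = 0 := by
  rw [u_pow, mul_T_apply]
  obtain ⟨j, hj⟩ := hk
  rcases lt_or_ge (k - -(2 * (n : ℤ))) 0 with h | h
  · exact toLaurent_apply_neg _ _ h
  · have h1 : k - -(2 * (n : ℤ)) = (((k + 2 * n).toNat : ℕ) : ℤ) := by omega
    rw [h1, toLaurent_apply_coe]
    apply Wp_coeff_odd
    rw [Nat.odd_iff]
    omega

lemma uL_pow_invert (n : ℕ) : invert (uL ^ n) = uL ^ n := by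
  rw [map_pow]
  congr 1
  rw [uL, map_pow, map_sub, invert_T, invert_T]
  ring_nf

lemma symm_even_bounded (D : ℕ) :
    ∀ f : LaurentPolynomial ℚ, invert f = f → (∀ k : ℤ, Odd k → f.coeff k = 0) →
    (∀ k : ℤ, 2 * (D : ℤ) < k → f.coeff k = 0) →
    ∃ P : Polynomial ℚ, f = Polynomial.aeval uL P := by
  induction D with
  | zero =>
    intro f hsym hodd hbd
    refine ⟨Polynomial.C (f.coeff 0), ?_⟩
    rw [Polynomial.aeval_C, ← LaurentPolynomial.C_eq_algebraMap]
    ext k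
    rcases lt_trichotomy k 0 with hk | hk | hk
    · have h1 : f.coeff k = f.coeff (-k) := by
        conv_lhs => rw [← hsym]
        exact invert_apply _ _
      rw [h1, hbd (-k) (by omega), C_apply, if_neg (by omega)]
    · subst hk; rw [C_apply, if_pos rfl]
    · rw [hbd k (by omega), C_apply, if_neg (by omega)]
  | succ D ih =>
    intro f hsym hodd hbd
    set c : ℚ := f.coeff (2 * ((D : ℤ) + 1)) with hc
    set g : LaurentPolynomial ℚ := f - c • uL ^ (D + 1) with hg
    have happ : ∀ k : ℤ, g.coeff k = f.coeff k - c * (uL ^ (D + 1)).coeff k := by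
      intro k
      rw [hg, AddMonoidAlgebra.coeff_sub, Finsupp.sub_apply, AddMonoidAlgebra.coeff_smul,
          Finsupp.smul_apply, smul_eq_mul]
    have hg_sym : invert g = g := by
      rw [hg, map_sub, hsym, map_smul, uL_pow_invert]
    have hg_odd : ∀ k : ℤ, Odd k → g.coeff k = 0 := by
      intro k hk
      rw [happ, hodd k hk, uL_pow_odd _ _ hk, mul_zero, sub_zero]
    have hg_bd : ∀ k : ℤ, 2 * (D : ℤ) < k → g.coeff k = 0 := by
      intro k hk
      have h3 : k = 2 * (D : ℤ) + 1 ∨ k = 2 * ((D : ℤ) + 1) ∨ 2 * ((D : ℤ) + 1) < k := by omega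
      rcases h3 with h3 | h3 | h3
      · exact hg_odd k (by rw [h3]; exact ⟨D, by ring⟩)
      · rw [happ, h3, ← hc]
        have := uL_pow_top (D + 1)
        push_cast at this ⊢
        rw [this, mul_one, sub_self]
      · rw [happ, hbd k (by omega), uL_pow_bd (D + 1) k (by push_cast; omega), mul_zero, sub_zero]
    obtain ⟨P', hP'⟩ := ih g hg_sym hg_odd hg_bd
    refine ⟨P' + Polynomial.C c * Polynomial.X ^ (D + 1), ?_⟩
    rw [map_add, ← hP', map_mul, Polynomial.aeval_C, map_pow, Polynomial.aeval_X]
    rw [hg, ← Algebra.smul_def]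
    abel

end Stmt11Aux

theorem stmt11 (d m p : ℕ) (hd : 1 ≤ d) (hm : 1 ≤ m) (hcop : Nat.Coprime d m)
    (hp : p.Prime) (μ : Nat.Partition (p * d)) (hμ : ∃ c ∈ μ.parts, ¬ p ∣ c) :
    ∃ P : Polynomial ℚ,
      (μ.parts.map (fun c => QL (p * m) (c : ℤ))).prod =
      QL (p * m) 1 * QL p 1 * Polynomial.aeval ((T 1 - T (-1)) ^ 2) P := by
  classical
  open Stmt11Aux Polynomial in
  have hp0 : 0 < p := hp.pos
  have hpm_pos : 0 < p * m := by positivity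
  obtain ⟨G, hkey⟩ := Stmt11Aux.key_dvd p m d hp hm hd hcop μ.parts
    (fun c hc => μ.parts_pos hc) μ.parts_sum hμ
  have hq1 : Stmt11Aux.q (p * m) 1 ≠ 0 := Stmt11Aux.q_ne_zero _ _ hpm_pos one_pos
  have hq2 : Stmt11Aux.q p 1 ≠ 0 := Stmt11Aux.q_ne_zero _ _ hp0 one_pos
  -- `G` is even
  have hσq : ∀ (n c : ℕ),
      Polynomial.aeval (-Polynomial.X : Polynomial ℚ) (Stmt11Aux.q n c) = Stmt11Aux.q n c := by
    intro n c
    rw [Stmt11Aux.q, map_sum]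
    apply Finset.sum_congr rfl
    intro j _
    rw [map_pow, Polynomial.aeval_X]
    exact Even.neg_pow ⟨c * j, by ring⟩ _
  have hσG : Polynomial.aeval (-Polynomial.X : Polynomial ℚ) G = G := by
    have h := congrArg (Polynomial.aeval (-Polynomial.X : Polynomial ℚ)) hkey
    rw [map_mul, map_mul, hσq, hσq] at h
    have hL : Polynomial.aeval (-Polynomial.X : Polynomial ℚ)
        ((μ.parts.map fun c => Stmt11Aux.q (p * m) c).prod)
        = (μ.parts.map fun c => Stmt11Aux.q (p * m) c).prod := by
      rw [map_multiset_prod, Multiset.map_map]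
      congr 1
      exact Multiset.map_congr rfl (fun c _ => hσq _ _)
    rw [hL] at h
    have h2 := hkey.symm.trans h
    exact (mul_left_cancel₀ (mul_ne_zero hq1 hq2) h2).symm
  have hGeven : ∀ k : ℕ, Odd k → G.coeff k = 0 := by
    intro k hk
    have h := congrArg (fun r => Polynomial.coeff r k) hσG
    rw [Stmt11Aux.aeval_negX_coeff, hk.neg_one_pow] at h
    linarith
  -- the shift
  set s : ℤ := -((p : ℤ) * m - 1) * ((p : ℤ) * d) + ((p : ℤ) * m - 1) + ((p : ℤ) - 1)
    with hs_def
  -- main Laurent equation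
  have hTsum : ((μ.parts.map (fun c : ℕ => -((c : ℤ) * (((p * m : ℕ) : ℤ) - 1)))).sum) =
      -((p : ℤ) * m - 1) * ((p : ℤ) * d) := by
    have h1 : (μ.parts.map (fun c : ℕ => -((c : ℤ) * (((p * m : ℕ) : ℤ) - 1)))) =
        μ.parts.map (fun c : ℕ => (-(((p * m : ℕ) : ℤ) - 1)) * ((fun x : ℕ => (x : ℤ)) c)) :=
      Multiset.map_congr rfl (fun c _ => by push_cast; ring)
    rw [h1, Multiset.sum_map_mul_left]
    have h2 : ((μ.parts.map (fun c : ℕ => (c : ℤ))).sum) = ((μ.parts.sum : ℕ) : ℤ) :=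
      (Nat.cast_multiset_sum _ ).symm
    rw [h2, μ.parts_sum]
    push_cast
    ring
  have hLHS : (μ.parts.map fun c : ℕ => QL (p * m) (c : ℤ)).prod =
      Polynomial.toLaurent ((μ.parts.map fun c => Stmt11Aux.q (p * m) c).prod) *
        T (-((p : ℤ) * m - 1) * ((p : ℤ) * d)) := by
    have hQc : (μ.parts.map fun c : ℕ => QL (p * m) (c : ℤ)) =
        μ.parts.map (fun c : ℕ => Polynomial.toLaurent (Stmt11Aux.q (p * m) c) *
          T (-((c : ℤ) * (((p * m : ℕ) : ℤ) - 1)))) :=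
      Multiset.map_congr rfl (fun c _ => Stmt11Aux.QL_eq (p * m) c)
    rw [hQc, Multiset.prod_map_mul]
    congr 1
    · rw [map_multiset_prod, Multiset.map_map]
      rfl
    · rw [Stmt11Aux.prod_map_T μ.parts (fun c : ℕ => -((c : ℤ) * (((p * m : ℕ) : ℤ) - 1))),
        hTsum]
  have hQL1 := Stmt11Aux.QL_eq (p * m) 1
  have hQL2 := Stmt11Aux.QL_eq p 1
  simp only [Nat.cast_one] at hQL1 hQL2
  have hs_eq : -((p : ℤ) * m - 1) * ((p : ℤ) * d) =
      (-(1 * (((p * m : ℕ) : ℤ) - 1))) + ((-(1 * (((p : ℕ) : ℤ) - 1))) + s) := by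
    rw [hs_def]; push_cast; ring
  have hmain : (μ.parts.map fun c : ℕ => QL (p * m) (c : ℤ)).prod =
      QL (p * m) 1 * QL p 1 * (Polynomial.toLaurent G * T s) := by
    rw [hLHS, hkey, hQL1, hQL2, map_mul, map_mul, hs_eq, T_add, T_add]
    ring
  -- symmetry
  have hQLinv : ∀ (n : ℕ) (k : ℤ), invert (QL n k) = QL n k := by
    intro n k
    rw [QL, map_sum, ← Finset.sum_range_reflect]
    apply Finset.sum_congr rfl
    intro j hj
    rw [invert_T]
    congr 1
    have hj' : j < n := Finset.mem_range.mp hj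
    rw [show ((n - 1 - j : ℕ) : ℤ) = (n : ℤ) - 1 - j by omega]
    ring
  have hProdInv : invert ((μ.parts.map fun c : ℕ => QL (p * m) (c : ℤ)).prod) =
      (μ.parts.map fun c : ℕ => QL (p * m) (c : ℤ)).prod := by
    rw [map_multiset_prod, Multiset.map_map]
    congr 1
    exact Multiset.map_congr rfl (fun c _ => hQLinv _ _)
  have hQLne : QL (p * m) 1 * QL p 1 ≠ 0 := by
    rw [hQL1, hQL2]
    exact mul_ne_zero
      (mul_ne_zero (Polynomial.toLaurent_ne_zero.mpr hq1) ((isUnit_T _).ne_zero))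
      (mul_ne_zero (Polynomial.toLaurent_ne_zero.mpr hq2) ((isUnit_T _).ne_zero))
  have hF : invert (Polynomial.toLaurent G * T s) = Polynomial.toLaurent G * T s := by
    have h := hProdInv
    rw [hmain, map_mul, map_mul, hQLinv, hQLinv] at h
    exact mul_left_cancel₀ hQLne h
  -- bound data
  have h2p : (2 : ℤ) ≤ (p : ℤ) := by exact_mod_cast hp.two_le
  have hm1 : (1 : ℤ) ≤ (m : ℤ) := by exact_mod_cast hm
  have hd1 : (1 : ℤ) ≤ (d : ℤ) := by exact_mod_cast hd
  have hs_nonpos : s ≤ 0 := by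
    have e1 : (1 : ℤ) ≤ (p : ℤ) * m - 1 := by nlinarith
    have e2 : (1 : ℤ) ≤ (p : ℤ) * d - 1 := by nlinarith
    have e3 : ((p : ℤ) * m - 1) * 1 ≤ ((p : ℤ) * m - 1) * (((p : ℤ) * d) - 1) :=
      mul_le_mul_of_nonneg_left e2 (by linarith)
    rw [hs_def]
    nlinarith [e3]
  have hs_even : ∃ r : ℤ, s = 2 * r := by
    rcases Nat.even_or_odd p with hpe | hpo
    · have hp2 : p = 2 := (Nat.Prime.even_iff hp).mp hpe
      exact ⟨-(2 * (m : ℤ) * d) + d + m, by rw [hs_def, hp2]; push_cast; ring⟩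
    · obtain ⟨a, ha⟩ := hpo
      rcases Nat.even_or_odd d with hde | hdo
      · rcases Nat.even_or_odd m with hme | hmo
        · exfalso
          have hdvd : (2 : ℕ) ∣ Nat.gcd d m := Nat.dvd_gcd hde.two_dvd hme.two_dvd
          have hg1 : Nat.gcd d m = 1 := hcop
          rw [hg1] at hdvd
          norm_num at hdvd
        · obtain ⟨b, hb⟩ := hmo
          exact ⟨(2 * (a : ℤ) * b + a + b) * (1 - (p : ℤ) * d) + a, by
            rw [hs_def, ha, hb]; push_cast; ring⟩
      · obtain ⟨b, hb⟩ := hdo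
        exact ⟨-((p : ℤ) * m - 1) * (2 * (a : ℤ) * b + a + b) + a, by
          rw [hs_def, ha, hb]; push_cast; ring⟩
  obtain ⟨r, hr⟩ := hs_even
  set D : ℕ := (-r).toNat with hD
  have hDr : 2 * (D : ℤ) = -s := by omega
  have hbd : ∀ k : ℤ, 2 * (D : ℤ) < k → (Polynomial.toLaurent G * T s : LaurentPolynomial ℚ).coeff k = 0 := by
    intro k hk
    have hsymk : (Polynomial.toLaurent G * T s : LaurentPolynomial ℚ).coeff k =
        (Polynomial.toLaurent G * T s : LaurentPolynomial ℚ).coeff (-k) := by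
      conv_lhs => rw [← hF]
      exact invert_apply _ _
    rw [hsymk, Stmt11Aux.mul_T_apply]
    apply Stmt11Aux.toLaurent_apply_neg
    omega
  have hodd : ∀ k : ℤ, Odd k → (Polynomial.toLaurent G * T s : LaurentPolynomial ℚ).coeff k = 0 := by
    intro k hk
    rw [Stmt11Aux.mul_T_apply]
    rcases lt_or_ge (k - s) 0 with h | h
    · exact Stmt11Aux.toLaurent_apply_neg _ _ h
    · rw [show k - s = (((k - s).toNat : ℕ) : ℤ) by omega, Stmt11Aux.toLaurent_apply_coe]
      apply hGeven
      obtain ⟨j, hj⟩ := hk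
      rw [Nat.odd_iff]
      omega
  obtain ⟨P, hP⟩ := Stmt11Aux.symm_even_bounded D (Polynomial.toLaurent G * T s) hF hodd hbd
  refine ⟨P, ?_⟩
  have h2 : (μ.parts.map (fun c : ℕ => QL (p * m) (c : ℤ))).prod =
      QL (p * m) 1 * QL p 1 * Polynomial.aeval ((T 1 - T (-1)) ^ 2) P := by
    rw [hmain, hP]
    rfl
  rw [← h2]
  congr 1
  show (Multiset.bind μ.parts (fun a => {(a : ℤ)})).map (fun c : ℤ => QL (p * m) c) =
    Multiset.map (fun c : ℕ => QL (p * m) (c : ℤ)) μ.parts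
  rw [Multiset.bind_singleton, Multiset.map_map]
  rfl
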